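/- Let d, m0, n, k, b be integers with k < d. Define v = d(d+3)/2 − m0(m0+1)/2 − 10n, v_P = (d−k)(d−k+3)/2 − m0(m0+1)/2 − 10(n−b), v_F = d(d+3)/2 − (d−k)(d−k+1)/2 − 10b, v̂_P = (d−k−1)(d−k+2)/2 − m0(m0+1)/2 − 10(n−b), and v̂_F = d(d+3)/2 − (d−k+1)(d−k+2)/2 − 10b. Assume v ≥ −1, v_P ≥ −1, and v_F ≥ −1. Then (v_P − max(−1, v̂_P) − 1) + (v_F − max(−1, v̂_F) − 1) ≥ d − k − 1. -/
import Mathlib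


/-- Arithmetic core of the lemma on systems of non-negative virtual dimension:
with all virtual dimensions as in a `(k, b)` degeneration of `L(d, m0, n, 4)`, if
`v ≥ -1`, `v_P ≥ -1` and `v_F ≥ -1`, then `r_P + r_F ≥ d - k - 1`. -/
theorem rP_add_rF_ge (d m0 n k b : ℤ) (hk : k < d)
    (hv : -1 ≤ d * (d + 3) / 2 - m0 * (m0 + 1) / 2 - 10 * n)
    (hvP : -1 ≤ (d - k) * (d - k + 3) / 2 - m0 * (m0 + 1) / 2 - 10 * (n - b))
    (hvF : -1 ≤ d * (d + 3) / 2 - (d - k) * (d - k + 1) / 2 - 10 * b) :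
    (((d - k) * (d - k + 3) / 2 - m0 * (m0 + 1) / 2 - 10 * (n - b)) -
        max (-1) ((d - k - 1) * (d - k + 2) / 2 - m0 * (m0 + 1) / 2 - 10 * (n - b)) - 1) +
      ((d * (d + 3) / 2 - (d - k) * (d - k + 1) / 2 - 10 * b) -
        max (-1) (d * (d + 3) / 2 - (d - k + 1) * (d - k + 2) / 2 - 10 * b) - 1) ≥
    d - k - 1 := by
  have h1 : (d - k - 1) * (d - k + 2) = (d - k) * (d - k + 3) - 2 * (d - k + 1) := by ring
  have h2 : (d - k + 1) * (d - k + 2) = (d - k) * (d - k + 1) + 2 * (d - k + 1) := by ring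
  have h3 : (d - k) * (d - k + 3) = (d - k) * (d - k + 1) + 2 * (d - k) := by ring
  have h4 : d * (d + 3) = d * (d + 1) + 2 * d := by ring
  have e1 : 2 ∣ d * (d + 1) := (Int.even_mul_succ_self d).two_dvd
  have e2 : 2 ∣ m0 * (m0 + 1) := (Int.even_mul_succ_self m0).two_dvd
  have e3 : 2 ∣ (d - k) * (d - k + 1) := (Int.even_mul_succ_self (d - k)).two_dvd
  rcases max_cases (-1 : ℤ) ((d - k - 1) * (d - k + 2) / 2 - m0 * (m0 + 1) / 2 - 10 * (n - b)) with
    ⟨hM1, hM1'⟩ | ⟨hM1, hM1'⟩ <;>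
  rcases max_cases (-1 : ℤ) (d * (d + 3) / 2 - (d - k + 1) * (d - k + 2) / 2 - 10 * b) with
    ⟨hM2, hM2'⟩ | ⟨hM2, hM2'⟩ <;>
  rw [hM1, hM2] <;> omega
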